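/- If a₁ ≠ 0 and the identities a₁c₁₁ + a₂c₂₁ = a₁³, a₁c₁₂ + a₂c₂₂ = 3a₁²a₂, a₁c₁₃ + a₂c₂₃ = 3a₁a₂², a₁c₁₄ + a₂c₂₄ = a₂³ hold, then α := a₂/a₁ satisfies the three quadratic equations: 3c₂₁α² + (3c₁₁ − c₂₂)α − c₁₂ = 0; c₂₂α² + (c₁₂ − c₂₃)α − c₁₃ = 0; c₂₃α² + (c₁₃ − 3c₂₄)α − 3c₁₄ = 0. -/

import Mathlib

/-- The ratio α = a₂/a₁ satisfies three quadratic equations. -/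
theorem stmt_9 (a1 a2 c11 c12 c13 c14 c21 c22 c23 c24 α : ℂ)
    (ha1 : a1 ≠ 0) (hα : α = a2 / a1)
    (h1 : a1 * c11 + a2 * c21 = a1 ^ 3)
    (h2 : a1 * c12 + a2 * c22 = 3 * a1 ^ 2 * a2)
    (h3 : a1 * c13 + a2 * c23 = 3 * a1 * a2 ^ 2)
    (h4 : a1 * c14 + a2 * c24 = a2 ^ 3) :
    3 * c21 * α ^ 2 + (3 * c11 - c22) * α - c12 = 0 ∧
    c22 * α ^ 2 + (c12 - c23) * α - c13 = 0 ∧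
    c23 * α ^ 2 + (c13 - 3 * c24) * α - 3 * c14 = 0 := by
  subst hα
  refine ⟨?_, ?_, ?_⟩
  · have h : a1 ^ 2 * (3 * c21 * (a2 / a1) ^ 2 + (3 * c11 - c22) * (a2 / a1) - c12) = 0 := by
      field_simp
      linear_combination (3 * a2 * h1 - a1 * h2)
    exact (mul_eq_zero.1 h).resolve_left (pow_ne_zero 2 ha1)
  · have h : a1 ^ 2 * (c22 * (a2 / a1) ^ 2 + (c12 - c23) * (a2 / a1) - c13) = 0 := by
      field_simp
      linear_combination (a2 * h2 - a1 * h3)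
    exact (mul_eq_zero.1 h).resolve_left (pow_ne_zero 2 ha1)
  · have h : a1 ^ 2 * (c23 * (a2 / a1) ^ 2 + (c13 - 3 * c24) * (a2 / a1) - 3 * c14) = 0 := by
      field_simp
      linear_combination (a2 * h3 - 3 * a1 * h4)
    exact (mul_eq_zero.1 h).resolve_left (pow_ne_zero 2 ha1)
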